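/- Let C be a category with finite limits which is cartesian closed and admits a subobject classifier ⊤ : 1 ⟶ Ω. Let P be a class of morphisms of C that is stable under base change, respects isomorphisms, is stable under composition, contains all monomorphisms of C, and contains the unique morphism Ω ⟶ 1. Let G be a comonad on C whose underlying endofunctor preserves finite limits and maps morphisms in P to morphisms in P. Let Q be the class of morphisms of the category of G-coalgebras whose underlying morphism lies in P. Then: (i) Q is stable under base change; (ii) Q is stable under composition and respects isomorphisms; (iii) Q contains all monomorphisms of the category of G-coalgebras; and (iv) the category of G-coalgebras admits a subobject classifier ⊤' : 1 ⟶ Ω' such that the unique morphism Ω' ⟶ 1 lies in Q. -/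

import Mathlib

open CategoryTheory CategoryTheory.Limits

universe v u

/-- A monomorphism `truth : ⊤_ C ⟶ Ω` out of the terminal object is a subobject classifier
if every monomorphism `m : A ⟶ B` arises as the pullback of `truth` along a unique
classifying morphism `B ⟶ Ω`. -/
structure IsClassifier {C : Type u} [Category.{v} C] [HasTerminal C]
    {Ω : C} (truth : ⊤_ C ⟶ Ω) : Prop where
  mono : Mono truth
  classifies : ∀ {A B : C} (m : A ⟶ B), Mono m →
    ∃! χ : B ⟶ Ω, IsPullback (terminal.from A) m truth χ

/-- The category of coalgebras for a comonad whose underlying endofunctor preserves finite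
limits has finite limits, created by the forgetful functor. -/
theorem coalgebraHasFiniteLimits {C : Type u} [Category.{v} C] [HasFiniteLimits C]
    (G : Comonad C) [PreservesFiniteLimits G.toFunctor] :
    HasFiniteLimits (Comonad.Coalgebra G) := by
  constructor
  intro J _ _
  haveI : PreservesLimitsOfShape J G.toFunctor := inferInstance
  exact hasLimitsOfShape_of_hasLimitsOfShape_createsLimitsOfShape (Comonad.forget G)

/-- Let `C` be a cartesian closed category with finite limits admitting a
subobject classifier `truth : ⊤_ C ⟶ Ω`.  Let `P` be a class of morphisms of `C` stable under
base change, respecting isomorphisms, stable under composition, containing all monomorphisms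
and the unique morphism `Ω ⟶ ⊤_ C`.  Let `G` be a comonad on `C` whose underlying endofunctor
preserves finite limits and maps `P` to `P`, and let `Q` be the class of morphisms of
`G`-coalgebras whose underlying morphism lies in `P`.  Then (i) `Q` is stable under base
change; (ii) `Q` is stable under composition and respects isomorphisms; (iii) `Q` contains all
monomorphisms of the category of `G`-coalgebras; (iv) the category of `G`-coalgebras admits a
subobject classifier `truth' : ⊤ ⟶ Ω'` whose `Ω' ⟶ ⊤` lies in `Q`.
(Theorem 5.1.3(3)–(4)/Corollary 5.2.1(3): the display topos of coalgebras.) -/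
theorem display_topos_of_coalgebras
    {C : Type u} [Category.{v} C] [HasFiniteLimits C]
    [CartesianMonoidalCategory C] [MonoidalClosed C]
    {Ω : C} (truth : ⊤_ C ⟶ Ω) (hclass : IsClassifier truth)
    (P : MorphismProperty C) [P.IsStableUnderBaseChange] [P.RespectsIso]
    [P.IsStableUnderComposition]
    (hmono : MorphismProperty.monomorphisms C ≤ P)
    (hΩ : P (terminal.from Ω))
    (G : Comonad C) [PreservesFiniteLimits G.toFunctor]
    (hG : ∀ ⦃X Y : C⦄ (f : X ⟶ Y), P f → P (G.toFunctor.map f)) :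
    letI : HasFiniteLimits (Comonad.Coalgebra G) := coalgebraHasFiniteLimits G
    (P.inverseImage (Comonad.forget G)).IsStableUnderBaseChange ∧
    ((P.inverseImage (Comonad.forget G)).IsStableUnderComposition ∧
      (P.inverseImage (Comonad.forget G)).RespectsIso) ∧
    MorphismProperty.monomorphisms (Comonad.Coalgebra G) ≤
      P.inverseImage (Comonad.forget G) ∧
    ∃ (Ω' : Comonad.Coalgebra G) (truth' : ⊤_ (Comonad.Coalgebra G) ⟶ Ω'),
      IsClassifier truth' ∧ P.inverseImage (Comonad.forget G) (terminal.from Ω') := by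
  letI : HasFiniteLimits (Comonad.Coalgebra G) := coalgebraHasFiniteLimits G
  haveI : PreservesFiniteLimits (Comonad.forget G) := by
    constructor
    intro J _ _
    haveI : PreservesLimitsOfShape J G.toFunctor := inferInstance
    infer_instance
  refine ⟨?_, ⟨?_, inferInstance⟩, ?_, ?_⟩
  · -- (i) stable under base change
    constructor
    intro X Y Y' S f g f' g' sq hg
    exact MorphismProperty.of_isPullback (P := P)
      (Functor.map_isPullback (Comonad.forget G) sq) hg
  · -- (ii) stable under composition
    constructor
    intro X Y Z f g hf hg
    show P ((Comonad.forget G).map (f ≫ g))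
    rw [Functor.map_comp]
    exact P.comp_mem _ _ hf hg
  · -- (iii) monomorphisms
    intro A B m hm
    haveI : Mono m := hm
    haveI : Mono ((Comonad.forget G).map m) :=
      preserves_mono_of_preservesLimit (Comonad.forget G) m
    exact hmono _ this
  · -- (iv) the subobject classifier
    haveI := hclass.mono
    haveI : Mono (G.toFunctor.map truth) :=
      preserves_mono_of_preservesLimit G.toFunctor truth
    have hterm : IsTerminal (G.toFunctor.obj (⊤_ C)) :=
      terminalIsTerminal.isTerminalObj G.toFunctor (⊤_ C)
    have hGGterm : IsTerminal (G.toFunctor.obj (G.toFunctor.obj (⊤_ C))) :=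
      hterm.isTerminalObj G.toFunctor _
    set g1 : (⊤_ C) ⟶ G.toFunctor.obj (⊤_ C) := hterm.from (⊤_ C) with hg1
    haveI : Mono g1 := ⟨fun a b _ => terminal.hom_ext a b⟩
    set m₀ : (⊤_ C) ⟶ G.toFunctor.obj Ω := g1 ≫ G.toFunctor.map truth with hm₀def
    haveI : Mono m₀ := mono_comp _ _
    obtain ⟨τ, hτ, hτu⟩ := hclass.classifies m₀ inferInstance
    have hm₀τ : m₀ ≫ τ = truth := by
      have h0 : terminal.from (⊤_ C) = 𝟙 (⊤_ C) := terminal.hom_ext _ _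
      rw [← hτ.w, h0, Category.id_comp]
    set j : G.toFunctor.obj Ω ⟶ G.toFunctor.obj Ω := G.δ.app Ω ≫ G.toFunctor.map τ with hjdef
    have hm₀j : m₀ ≫ j = m₀ := by
      have h1 : G.toFunctor.map truth ≫ G.δ.app Ω
          = G.δ.app (⊤_ C) ≫ G.toFunctor.map (G.toFunctor.map truth) := by
        simpa using G.δ.naturality truth
      have h2 : g1 ≫ G.δ.app (⊤_ C) = g1 ≫ G.toFunctor.map g1 := hGGterm.hom_ext _ _
      calc m₀ ≫ j = g1 ≫ (G.toFunctor.map truth ≫ G.δ.app Ω) ≫ G.toFunctor.map τ := by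
            rw [hm₀def, hjdef]; simp [Category.assoc]
        _ = (g1 ≫ G.δ.app (⊤_ C)) ≫ G.toFunctor.map (G.toFunctor.map truth ≫ τ) := by
            rw [h1]; simp [Category.assoc, G.toFunctor.map_comp]
        _ = g1 ≫ G.toFunctor.map (g1 ≫ G.toFunctor.map truth ≫ τ) := by
            rw [h2]; simp [Category.assoc, G.toFunctor.map_comp]
        _ = g1 ≫ G.toFunctor.map (m₀ ≫ τ) := by rw [hm₀def]; simp [Category.assoc]
        _ = m₀ := by rw [hm₀τ, hm₀def]
    have hm₀ε : m₀ ≫ G.ε.app Ω = truth := by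
      have hnat : G.toFunctor.map truth ≫ G.ε.app Ω = G.ε.app (⊤_ C) ≫ truth := by
        simpa using G.ε.naturality truth
      rw [hm₀def, Category.assoc, hnat, ← Category.assoc,
        show g1 ≫ G.ε.app (⊤_ C) = 𝟙 (⊤_ C) from terminal.hom_ext _ _, Category.id_comp]
    set E := equalizer (𝟙 (G.toFunctor.obj Ω)) j with hEdef
    set e : E ⟶ G.toFunctor.obj Ω := equalizer.ι _ _ with hedef
    have hej : e ≫ j = e := by
      rw [← equalizer.condition, Category.comp_id]
    haveI : Mono (G.toFunctor.map e) := preserves_mono_of_preservesLimit G.toFunctor e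
    haveI : Mono (G.toFunctor.map (G.toFunctor.map e)) :=
      preserves_mono_of_preservesLimit G.toFunctor _
    have hδτ : G.toFunctor.map τ ≫ G.δ.app Ω
        = G.δ.app (G.toFunctor.obj Ω) ≫ G.toFunctor.map (G.toFunctor.map τ) := by
      simpa using G.δ.naturality τ
    have hjδ : j ≫ G.δ.app Ω = G.δ.app Ω ≫ G.toFunctor.map j := by
      calc j ≫ G.δ.app Ω
          = G.δ.app Ω ≫ G.toFunctor.map τ ≫ G.δ.app Ω := by rw [hjdef]; simp [Category.assoc]
        _ = (G.δ.app Ω ≫ G.δ.app (G.toFunctor.obj Ω)) ≫ G.toFunctor.map (G.toFunctor.map τ) := by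
            rw [hδτ]; simp [Category.assoc]
        _ = (G.δ.app Ω ≫ G.toFunctor.map (G.δ.app Ω)) ≫ G.toFunctor.map (G.toFunctor.map τ) := by
            rw [Comonad.coassoc]
        _ = G.δ.app Ω ≫ G.toFunctor.map j := by
            rw [hjdef]; simp [Category.assoc, G.toFunctor.map_comp]
    have hGE := isLimitOfHasEqualizerOfPreservesLimit G.toFunctor (𝟙 (G.toFunctor.obj Ω)) j
    obtain ⟨σ, hσ⟩ := Fork.IsLimit.lift' hGE (e ≫ G.δ.app Ω) (by
      rw [CategoryTheory.Functor.map_id, Category.comp_id, Category.assoc, ← hjδ,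
        ← Category.assoc, hej])
    have hσ' : σ ≫ G.toFunctor.map e = e ≫ G.δ.app Ω := by simpa [hedef] using hσ
    have hcounit : σ ≫ G.ε.app E = 𝟙 E := by
      rw [← cancel_mono e]
      have hnat : G.ε.app E ≫ e = G.toFunctor.map e ≫ G.ε.app (G.toFunctor.obj Ω) := by
        simpa using (G.ε.naturality e).symm
      rw [Category.id_comp, Category.assoc, hnat, ← Category.assoc, hσ', Category.assoc,
        Comonad.left_counit, Category.comp_id]
    have hcoassoc : σ ≫ G.δ.app E = σ ≫ G.toFunctor.map σ := by
      rw [← cancel_mono (G.toFunctor.map (G.toFunctor.map e))]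
      have hnat : G.δ.app E ≫ G.toFunctor.map (G.toFunctor.map e)
          = G.toFunctor.map e ≫ G.δ.app (G.toFunctor.obj Ω) := by
        simpa using (G.δ.naturality e).symm
      calc (σ ≫ G.δ.app E) ≫ G.toFunctor.map (G.toFunctor.map e)
          = σ ≫ G.toFunctor.map e ≫ G.δ.app (G.toFunctor.obj Ω) := by
            rw [Category.assoc, hnat]
        _ = e ≫ G.δ.app Ω ≫ G.δ.app (G.toFunctor.obj Ω) := by
            rw [← Category.assoc, hσ', Category.assoc]
        _ = e ≫ G.δ.app Ω ≫ G.toFunctor.map (G.δ.app Ω) := by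
            rw [← Comonad.coassoc]
        _ = (e ≫ G.δ.app Ω) ≫ G.toFunctor.map (G.δ.app Ω) := by rw [Category.assoc]
        _ = (σ ≫ G.toFunctor.map e) ≫ G.toFunctor.map (G.δ.app Ω) := by rw [hσ']
        _ = σ ≫ G.toFunctor.map (e ≫ G.δ.app Ω) := by
            simp [Category.assoc, G.toFunctor.map_comp]
        _ = σ ≫ G.toFunctor.map (σ ≫ G.toFunctor.map e) := by rw [hσ']
        _ = (σ ≫ G.toFunctor.map σ) ≫ G.toFunctor.map (G.toFunctor.map e) := by
            simp [Category.assoc, G.toFunctor.map_comp]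
    set Ωc : Comonad.Coalgebra G := ⟨E, σ, hcounit, hcoassoc⟩ with hΩcdef
    have hτε : ∀ {X : C} (y : X ⟶ G.toFunctor.obj Ω), y ≫ j = y →
        y ≫ τ = y ≫ G.ε.app Ω := by
      intro X y hyj
      have hnat : G.toFunctor.map τ ≫ G.ε.app Ω = G.ε.app (G.toFunctor.obj Ω) ≫ τ := by
        simpa using G.ε.naturality τ
      calc y ≫ τ = y ≫ (G.δ.app Ω ≫ G.ε.app (G.toFunctor.obj Ω)) ≫ τ := by
            rw [Comonad.left_counit, Category.id_comp]
        _ = y ≫ G.δ.app Ω ≫ G.toFunctor.map τ ≫ G.ε.app Ω := by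
            rw [Category.assoc, hnat]
        _ = (y ≫ j) ≫ G.ε.app Ω := by rw [hjdef]; simp [Category.assoc]
        _ = y ≫ G.ε.app Ω := by rw [hyj]
    have htrue : ∀ {X : C} (y : X ⟶ G.toFunctor.obj Ω), y ≫ j = y →
        y ≫ G.ε.app Ω = terminal.from X ≫ truth → y = terminal.from X ≫ m₀ := by
      intro X y hyj hyε
      have h2 : terminal.from X ≫ truth = y ≫ τ := by rw [hτε y hyj, hyε]
      have h3 := hτ.lift_snd (terminal.from X) y h2
      rw [← h3]
      congr 1
      exact terminal.hom_ext _ _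
    have hadj : ∀ (B : Comonad.Coalgebra G) (c : B.A ⟶ Ω),
        (B.a ≫ G.toFunctor.map c) ≫ G.δ.app Ω
          = B.a ≫ G.toFunctor.map (B.a ≫ G.toFunctor.map c) := by
      intro B c
      have hnat : G.toFunctor.map c ≫ G.δ.app Ω
          = G.δ.app B.A ≫ G.toFunctor.map (G.toFunctor.map c) := by
        simpa using G.δ.naturality c
      rw [Category.assoc, hnat, ← Category.assoc, B.coassoc]
      simp [Category.assoc, G.toFunctor.map_comp]
    set T : Comonad.Coalgebra G := ⊤_ (Comonad.Coalgebra G) with hTdef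
    have hTA : IsTerminal T.A :=
      terminalIsTerminal.isTerminalObj (Comonad.forget G) (⊤_ (Comonad.Coalgebra G))
    have ht0cond : (terminal.from T.A ≫ m₀) ≫ 𝟙 (G.toFunctor.obj Ω)
        = (terminal.from T.A ≫ m₀) ≫ j := by
      rw [Category.comp_id, Category.assoc, hm₀j]
    set t0 : T.A ⟶ E := equalizer.lift _ ht0cond with ht0def
    have ht0 : t0 ≫ e = terminal.from T.A ≫ m₀ := equalizer.lift_ι _ _
    have hnatt : G.toFunctor.map truth ≫ G.δ.app Ω
        = G.δ.app (⊤_ C) ≫ G.toFunctor.map (G.toFunctor.map truth) := by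
      simpa using G.δ.naturality truth
    have htruth'h : T.a ≫ G.toFunctor.map t0 = t0 ≫ σ := by
      rw [← cancel_mono (G.toFunctor.map e)]
      have hpre : T.a ≫ G.toFunctor.map (terminal.from T.A ≫ g1)
          = (terminal.from T.A ≫ g1) ≫ G.δ.app (⊤_ C) := hGGterm.hom_ext _ _
      calc (T.a ≫ G.toFunctor.map t0) ≫ G.toFunctor.map e
          = T.a ≫ G.toFunctor.map (t0 ≫ e) := by
            simp [Category.assoc, G.toFunctor.map_comp]
        _ = T.a ≫ G.toFunctor.map ((terminal.from T.A ≫ g1) ≫ G.toFunctor.map truth) := by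
            rw [ht0, hm₀def]; simp [Category.assoc]
        _ = (T.a ≫ G.toFunctor.map (terminal.from T.A ≫ g1))
              ≫ G.toFunctor.map (G.toFunctor.map truth) := by
            simp [Category.assoc, G.toFunctor.map_comp]
        _ = ((terminal.from T.A ≫ g1) ≫ G.δ.app (⊤_ C))
              ≫ G.toFunctor.map (G.toFunctor.map truth) := by rw [hpre]
        _ = (terminal.from T.A ≫ g1) ≫ G.toFunctor.map truth ≫ G.δ.app Ω := by
            rw [hnatt]; simp [Category.assoc]
        _ = (terminal.from T.A ≫ m₀) ≫ G.δ.app Ω := by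
            rw [hm₀def]; simp [Category.assoc]
        _ = (t0 ≫ e) ≫ G.δ.app Ω := by rw [ht0]
        _ = t0 ≫ σ ≫ G.toFunctor.map e := by rw [Category.assoc, ← hσ']
        _ = (t0 ≫ σ) ≫ G.toFunctor.map e := by rw [Category.assoc]
    set truthc : T ⟶ Ωc := ⟨t0, htruth'h⟩ with htruthcdef
    refine ⟨Ωc, truthc, ⟨⟨fun g h _ => terminal.hom_ext g h⟩, ?_⟩, ?_⟩
    · -- classifies
      intro A B m hm
      haveI : Mono m := hm
      haveI hmf : Mono ((Comonad.forget G).map m) :=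
        preserves_mono_of_preservesLimit (Comonad.forget G) m
      haveI : Mono m.f := hmf
      obtain ⟨χ, hχ, hχu⟩ := hclass.classifies m.f inferInstance
      have hcomm : terminal.from A.A ≫ m₀ = m.f ≫ (B.a ≫ G.toFunctor.map χ) := by
        have h1 : m.f ≫ B.a ≫ G.toFunctor.map χ
            = (A.a ≫ G.toFunctor.map (terminal.from A.A)) ≫ G.toFunctor.map truth := by
          rw [← Category.assoc, ← m.h, Category.assoc, ← G.toFunctor.map_comp, ← hχ.w,
            G.toFunctor.map_comp, Category.assoc]
        have h2 : A.a ≫ G.toFunctor.map (terminal.from A.A) = terminal.from A.A ≫ g1 :=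
          hterm.hom_ext _ _
        rw [h1, h2, hm₀def, Category.assoc]
      have hGχ : IsPullback (G.toFunctor.map (terminal.from A.A)) (G.toFunctor.map m.f)
          (G.toFunctor.map truth) (G.toFunctor.map χ) := Functor.map_isPullback G.toFunctor hχ
      have hBig : IsPullback (terminal.from A.A) m.f m₀ (B.a ≫ G.toFunctor.map χ) := by
        refine IsPullback.of_isLimit' ⟨hcomm⟩ ?_
        have hw : ∀ s : PullbackCone m₀ (B.a ≫ G.toFunctor.map χ),
            (s.fst ≫ g1) ≫ G.toFunctor.map truth = (s.snd ≫ B.a) ≫ G.toFunctor.map χ := by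
          intro s
          rw [Category.assoc, ← hm₀def, s.condition]
          simp [Category.assoc]
        have hfacr : ∀ s : PullbackCone m₀ (B.a ≫ G.toFunctor.map χ),
            (hGχ.lift (s.fst ≫ g1) (s.snd ≫ B.a) (hw s) ≫ G.ε.app A.A) ≫ m.f = s.snd := by
          intro s
          have hnat : G.ε.app A.A ≫ m.f = G.toFunctor.map m.f ≫ G.ε.app B.A := by
            simpa using (G.ε.naturality m.f).symm
          rw [Category.assoc, hnat, ← Category.assoc, hGχ.lift_snd, Category.assoc,
            B.counit, Category.comp_id]
        exact PullbackCone.IsLimit.mk hcomm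
          (fun s => hGχ.lift (s.fst ≫ g1) (s.snd ≫ B.a) (hw s) ≫ G.ε.app A.A)
          (fun s => terminal.hom_ext _ _) hfacr
          (fun s mm h1 h2 => by rw [← cancel_mono m.f, h2, hfacr s])
      have hcompsq : IsPullback (terminal.from A.A) m.f truth
          ((B.a ≫ G.toFunctor.map χ) ≫ τ) := by
        have h := hBig.paste_horiz hτ
        rwa [show terminal.from A.A ≫ terminal.from (⊤_ C) = terminal.from A.A from
          terminal.hom_ext _ _] at h
      have hφτ : (B.a ≫ G.toFunctor.map χ) ≫ τ = χ := hχu _ hcompsq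
      have hφj : (B.a ≫ G.toFunctor.map χ) ≫ j = B.a ≫ G.toFunctor.map χ := by
        calc (B.a ≫ G.toFunctor.map χ) ≫ j
            = ((B.a ≫ G.toFunctor.map χ) ≫ G.δ.app Ω) ≫ G.toFunctor.map τ := by
              rw [hjdef]; simp [Category.assoc]
          _ = (B.a ≫ G.toFunctor.map (B.a ≫ G.toFunctor.map χ)) ≫ G.toFunctor.map τ := by
              rw [hadj B χ]
          _ = B.a ≫ G.toFunctor.map ((B.a ≫ G.toFunctor.map χ) ≫ τ) := by
              simp [Category.assoc, G.toFunctor.map_comp]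
          _ = B.a ≫ G.toFunctor.map χ := by rw [hφτ]
      have hliftcond : (B.a ≫ G.toFunctor.map χ) ≫ 𝟙 (G.toFunctor.obj Ω)
          = (B.a ≫ G.toFunctor.map χ) ≫ j := by rw [Category.comp_id, hφj]
      set χ' : B.A ⟶ E := equalizer.lift _ hliftcond with hχ'def
      have hχ'e : χ' ≫ e = B.a ≫ G.toFunctor.map χ := equalizer.lift_ι _ _
      have hχ'hom : B.a ≫ G.toFunctor.map χ' = χ' ≫ σ := by
        rw [← cancel_mono (G.toFunctor.map e)]
        calc (B.a ≫ G.toFunctor.map χ') ≫ G.toFunctor.map e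
            = B.a ≫ G.toFunctor.map (χ' ≫ e) := by
              simp [Category.assoc, G.toFunctor.map_comp]
          _ = B.a ≫ G.toFunctor.map (B.a ≫ G.toFunctor.map χ) := by rw [hχ'e]
          _ = (B.a ≫ G.toFunctor.map χ) ≫ G.δ.app Ω := (hadj B χ).symm
          _ = (χ' ≫ e) ≫ G.δ.app Ω := by rw [hχ'e]
          _ = χ' ≫ σ ≫ G.toFunctor.map e := by rw [Category.assoc, ← hσ']
          _ = (χ' ≫ σ) ≫ G.toFunctor.map e := by rw [Category.assoc]
      have hw0 : (terminal.from A : A ⟶ T).f ≫ t0 = m.f ≫ χ' := by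
        rw [← cancel_mono e]
        calc ((terminal.from A : A ⟶ T).f ≫ t0) ≫ e
            = (terminal.from A : A ⟶ T).f ≫ (terminal.from T.A ≫ m₀) := by
              rw [Category.assoc, ht0]
          _ = terminal.from A.A ≫ m₀ := by
              rw [← Category.assoc,
                show (terminal.from A : A ⟶ T).f ≫ terminal.from T.A
                  = terminal.from A.A from terminal.hom_ext _ _]
          _ = m.f ≫ (B.a ≫ G.toFunctor.map χ) := hcomm
          _ = (m.f ≫ χ') ≫ e := by rw [Category.assoc, hχ'e]
      have hsq : terminal.from A ≫ truthc = m ≫ (⟨χ', hχ'hom⟩ : B ⟶ Ωc) := by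
        apply Comonad.Coalgebra.Hom.ext'
        simpa using hw0
      have hU : IsPullback ((terminal.from A : A ⟶ T).f) m.f t0 χ' := by
        refine IsPullback.of_isLimit' ⟨hw0⟩ ?_
        have hw2 : ∀ s : PullbackCone t0 χ',
            terminal.from s.pt ≫ m₀ = s.snd ≫ (B.a ≫ G.toFunctor.map χ) := by
          intro s
          calc terminal.from s.pt ≫ m₀ = (s.fst ≫ terminal.from T.A) ≫ m₀ := by
                rw [show s.fst ≫ terminal.from T.A = terminal.from s.pt from
                  terminal.hom_ext _ _]
            _ = s.fst ≫ t0 ≫ e := by rw [Category.assoc, ht0]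
            _ = (s.snd ≫ χ') ≫ e := by rw [← Category.assoc, s.condition]
            _ = s.snd ≫ (B.a ≫ G.toFunctor.map χ) := by rw [Category.assoc, hχ'e]
        exact PullbackCone.IsLimit.mk hw0
          (fun s => hBig.lift (terminal.from s.pt) s.snd (hw2 s))
          (fun s => hTA.hom_ext _ _) (fun s => hBig.lift_snd _ _ _)
          (fun s mm h1 h2 => by rw [← cancel_mono m.f, h2, hBig.lift_snd])
      haveI : PreservesLimitsOfShape WalkingCospan G.toFunctor := inferInstance
      refine ⟨⟨χ', hχ'hom⟩, IsPullback.of_map (Comonad.forget G) hsq hU, ?_⟩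
      intro ψ hψ
      have hψ0 : IsPullback ((terminal.from A : A ⟶ T).f) m.f t0 ψ.f :=
        Functor.map_isPullback (Comonad.forget G) hψ
      have hyj : (ψ.f ≫ e) ≫ j = ψ.f ≫ e := by rw [Category.assoc, hej]
      have hum : m.f ≫ ψ.f ≫ e = terminal.from A.A ≫ m₀ := by
        calc m.f ≫ ψ.f ≫ e = ((terminal.from A : A ⟶ T).f ≫ t0) ≫ e := by
              rw [← Category.assoc, ← hψ0.w]
          _ = (terminal.from A : A ⟶ T).f ≫ (terminal.from T.A ≫ m₀) := by
              rw [Category.assoc, ht0]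
          _ = terminal.from A.A ≫ m₀ := by
              rw [← Category.assoc, show (terminal.from A : A ⟶ T).f ≫ terminal.from T.A
                = terminal.from A.A from terminal.hom_ext _ _]
      have hχ₁sq : IsPullback (terminal.from A.A) m.f truth (ψ.f ≫ e ≫ G.ε.app Ω) := by
        have hcw : terminal.from A.A ≫ truth = m.f ≫ ψ.f ≫ e ≫ G.ε.app Ω := by
          calc terminal.from A.A ≫ truth
              = terminal.from A.A ≫ m₀ ≫ G.ε.app Ω := by rw [hm₀ε]
            _ = (terminal.from A.A ≫ m₀) ≫ G.ε.app Ω := (Category.assoc _ _ _).symm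
            _ = (m.f ≫ ψ.f ≫ e) ≫ G.ε.app Ω := by rw [hum]
            _ = m.f ≫ ψ.f ≫ e ≫ G.ε.app Ω := by simp [Category.assoc]
        refine IsPullback.of_isLimit' ⟨hcw⟩ ?_
        have key : ∀ s : PullbackCone truth (ψ.f ≫ e ≫ G.ε.app Ω),
            hTA.from s.pt ≫ t0 = s.snd ≫ ψ.f := by
          intro s
          rw [← cancel_mono e]
          have h5 : (s.snd ≫ ψ.f ≫ e) ≫ G.ε.app Ω = terminal.from s.pt ≫ truth := by
            calc (s.snd ≫ ψ.f ≫ e) ≫ G.ε.app Ω = s.snd ≫ (ψ.f ≫ e ≫ G.ε.app Ω) := by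
                  simp [Category.assoc]
              _ = s.fst ≫ truth := s.condition.symm
              _ = terminal.from s.pt ≫ truth := by
                  rw [show s.fst = terminal.from s.pt from terminal.hom_ext _ _]
          have h6 : s.snd ≫ ψ.f ≫ e = terminal.from s.pt ≫ m₀ :=
            htrue _ (by rw [Category.assoc, hyj]) h5
          calc (hTA.from s.pt ≫ t0) ≫ e = hTA.from s.pt ≫ (terminal.from T.A ≫ m₀) := by
                rw [Category.assoc, ht0]
            _ = (hTA.from s.pt ≫ terminal.from T.A) ≫ m₀ := (Category.assoc _ _ _).symm
            _ = terminal.from s.pt ≫ m₀ := by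
                rw [show hTA.from s.pt ≫ terminal.from T.A
                  = terminal.from s.pt from terminal.hom_ext _ _]
            _ = s.snd ≫ ψ.f ≫ e := h6.symm
            _ = (s.snd ≫ ψ.f) ≫ e := by rw [Category.assoc]
        exact PullbackCone.IsLimit.mk hcw
          (fun s => hψ0.lift (hTA.from s.pt) s.snd (key s))
          (fun s => terminal.hom_ext _ _) (fun s => hψ0.lift_snd _ _ _)
          (fun s mm h1 h2 => by rw [← cancel_mono m.f, h2, hψ0.lift_snd])
      have hχ₁ : ψ.f ≫ e ≫ G.ε.app Ω = χ := hχu _ hχ₁sq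
      have hhom : B.a ≫ G.toFunctor.map (ψ.f ≫ e) = (ψ.f ≫ e) ≫ G.δ.app Ω := by
        rw [G.toFunctor.map_comp, ← Category.assoc, ψ.h, Category.assoc, hσ']
        simp [Category.assoc]
      have hψf : ψ.f ≫ e = B.a ≫ G.toFunctor.map χ := by
        calc ψ.f ≫ e = (ψ.f ≫ e) ≫ 𝟙 _ := by rw [Category.comp_id]
          _ = (ψ.f ≫ e) ≫ (G.δ.app Ω ≫ G.toFunctor.map (G.ε.app Ω)) := by
              rw [Comonad.right_counit]
          _ = (B.a ≫ G.toFunctor.map (ψ.f ≫ e)) ≫ G.toFunctor.map (G.ε.app Ω) := by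
              rw [← Category.assoc, ← hhom]
          _ = B.a ≫ G.toFunctor.map ((ψ.f ≫ e) ≫ G.ε.app Ω) := by
              simp [Category.assoc, G.toFunctor.map_comp]
          _ = B.a ≫ G.toFunctor.map χ := by rw [Category.assoc, hχ₁]
      apply Comonad.Coalgebra.Hom.ext'
      show ψ.f = χ'
      rw [← cancel_mono e, hχ'e, hψf]
    · -- the map to the terminal object lies in Q
      show P ((Comonad.forget G).map (terminal.from Ωc))
      set k : G.toFunctor.obj (⊤_ C) ⟶ ⊤_ C := terminal.from _ with hkdef
      haveI : IsIso k := ⟨g1, hterm.hom_ext _ _, terminal.hom_ext _ _⟩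
      have hmk : MorphismProperty.monomorphisms C k := inferInstanceAs (Mono k)
      have hme : MorphismProperty.monomorphisms C e := inferInstanceAs (Mono e)
      have h2 : P (G.toFunctor.map (terminal.from Ω) ≫ k) :=
        P.comp_mem _ _ (hG _ hΩ) (hmono _ hmk)
      have h4 : P (e ≫ (G.toFunctor.map (terminal.from Ω) ≫ k)) :=
        P.comp_mem _ _ (hmono _ hme) h2
      have h5 : (Comonad.forget G).map (terminal.from Ωc)
          = (e ≫ (G.toFunctor.map (terminal.from Ω) ≫ k))
              ≫ (terminalIsTerminal.uniqueUpToIso hTA).hom := hTA.hom_ext _ _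
      rw [h5]
      exact (@MorphismProperty.cancel_right_of_respectsIso _ _ P _ _ _ _ _ _ (Iso.isIso_hom _)).2 h4
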